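/- Let R ⊆ α × β, S ⊆ β × γ, T ⊆ γ × δ be finite relations and let J3 = {(x,y,z,u) : (x,y) ∈ R, (y,z) ∈ S, (z,u) ∈ T}. Then |J3| ≤ |R|^{1/3} · (Σ_{y ∈ β} |{x : (x,y) ∈ R}|²)^{1/3} · (Σ_{y ∈ β} |{z : (y,z) ∈ S}|²)^{1/3} · (Σ_{z ∈ γ} |{u : (z,u) ∈ T}|³)^{1/3}. (The q-inequality |J3| ≤ |R|^{1/3} · ‖deg_R(X|Y)‖_2^{2/3} · ‖deg_S(Z|Y)‖_2^{2/3} · ‖deg_T(U|Z)‖_3.) -/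

import Mathlib

open Finset

private lemma fiber_snd_card' {α β : Type*} [Fintype α] [DecidableEq α] [DecidableEq β]
    (W : Finset (α × β)) (y : β) :
    (univ.filter fun x : α => (x, y) ∈ W).card = (W.filter fun t => t.2 = y).card := by
  apply Finset.card_bij (fun x _ => (x, y))
  · intro x hx; simp_all
  · intro a ha b hb h; exact (Prod.mk.injEq .. ▸ h).1
  · intro t ht
    simp only [mem_filter] at ht
    exact ⟨t.1, by simp [ht.1, ← ht.2], by rw [← ht.2]⟩

private lemma fiber_fst_card' {α β : Type*} [Fintype β] [DecidableEq α] [DecidableEq β]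
    (W : Finset (α × β)) (a : α) :
    (univ.filter fun b : β => (a, b) ∈ W).card = (W.filter fun t => t.1 = a).card := by
  apply Finset.card_bij (fun b _ => (a, b))
  · intro x hx; simp_all
  · intro x hx y hy h; exact (Prod.mk.injEq .. ▸ h).2
  · intro t ht
    simp only [mem_filter] at ht
    exact ⟨t.2, by simp [ht.1, ← ht.2], by rw [← ht.2]⟩

private lemma main_real_bound {β γ : Type*} [Fintype β] [Fintype γ]
    [DecidableEq β] [DecidableEq γ]
    (S : Finset (β × γ)) (r : β → ℝ) (t : γ → ℝ) (sd : β → ℝ)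
    (hr : ∀ y, 0 ≤ r y) (ht : ∀ z, 0 ≤ t z)
    (hsd : ∀ y, sd y = ((univ.filter fun z : γ => (y, z) ∈ S).card : ℝ)) :
    (∑ y, ∑ z, if (y, z) ∈ S then r y * t z else 0)
    ≤ (∑ y, r y) ^ ((1:ℝ)/3) * (∑ y, r y ^ 2) ^ ((1:ℝ)/3)
      * (∑ y, sd y ^ 2) ^ ((1:ℝ)/3) * (∑ z, t z ^ 3) ^ ((1:ℝ)/3) := by
  classical
  set Ny : β → Finset γ := fun y => univ.filter fun z : γ => (y, z) ∈ S with hNy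
  set Q : β → ℝ := fun y => ∑ z ∈ Ny y, t z with hQdef
  set A : ℝ := ∑ y, r y with hA
  set B : ℝ := ∑ y, r y ^ 2 with hB
  set C : ℝ := ∑ y, sd y ^ 2 with hC
  set D : ℝ := ∑ z, t z ^ 3 with hD
  have hA0 : 0 ≤ A := Finset.sum_nonneg fun y _ => hr y
  have hB0 : 0 ≤ B := Finset.sum_nonneg fun y _ => sq_nonneg _
  have hC0 : 0 ≤ C := Finset.sum_nonneg fun y _ => sq_nonneg _
  have hD0 : 0 ≤ D := Finset.sum_nonneg fun z _ => pow_nonneg (ht z) 3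
  have hsd0 : ∀ y, 0 ≤ sd y := fun y => by rw [hsd y]; positivity
  have hQ0 : ∀ y, 0 ≤ Q y := fun y => Finset.sum_nonneg fun z _ => ht z
  -- step 1 : rewrite LHS
  have h1 : (∑ y, ∑ z, if (y, z) ∈ S then r y * t z else 0) = ∑ y, r y * Q y := by
    refine Finset.sum_congr rfl fun y _ => ?_
    rw [hQdef, Finset.mul_sum, hNy]
    rw [Finset.sum_filter]
  -- step 2 : Q y ^ 3 ≤ sd y ^ 2 * D
  have hQ3 : ∀ y, Q y ^ 3 ≤ sd y ^ 2 * D := by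
    intro y
    have hsub : ∑ z ∈ Ny y, t z ^ 3 ≤ D :=
      Finset.sum_le_sum_of_subset_of_nonneg (Finset.subset_univ _)
        (fun z _ _ => pow_nonneg (ht z) 3)
    rcases (Ny y).eq_empty_or_nonempty with he | hne
    · simp only [hQdef, he, Finset.sum_empty]
      norm_num
      positivity
    · have hcard : (0:ℝ) < ((Ny y).card : ℝ) := by
        exact_mod_cast Finset.card_pos.mpr hne
      have := pow_sum_div_card_le_sum_pow (f := t) (s := Ny y)
        (fun z _ => ht z) 2
      rw [div_le_iff₀ (pow_pos hcard 2)] at this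
      calc Q y ^ 3 = (∑ z ∈ Ny y, t z) ^ (2+1) := by rw [hQdef]
        _ ≤ (∑ z ∈ Ny y, t z ^ (2+1)) * ((Ny y).card : ℝ) ^ 2 := this
        _ ≤ D * sd y ^ 2 := by
            refine mul_le_mul hsub (by rw [hsd y]) (by positivity) hD0
        _ = sd y ^ 2 * D := mul_comm _ _
  -- step 3 : Q y ≤ sd y ^ (2/3) * D ^ (1/3)
  have hQle : ∀ y, Q y ≤ sd y ^ ((2:ℝ)/3) * D ^ ((1:ℝ)/3) := by
    intro y
    have h := Real.rpow_le_rpow (pow_nonneg (hQ0 y) 3) (hQ3 y) (by norm_num : (0:ℝ) ≤ 1/3)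
    calc Q y = (Q y ^ (3:ℕ)) ^ ((1:ℝ)/3) := by
          rw [← Real.rpow_natCast (Q y) 3, ← Real.rpow_mul (hQ0 y)]
          norm_num
      _ ≤ (sd y ^ 2 * D) ^ ((1:ℝ)/3) := by exact_mod_cast h
      _ = sd y ^ ((2:ℝ)/3) * D ^ ((1:ℝ)/3) := by
          rw [Real.mul_rpow (by positivity) hD0, ← Real.rpow_natCast (sd y) 2,
            ← Real.rpow_mul (hsd0 y)]
          norm_num
  -- step 4 :
  have h4 : ∑ y, r y * Q y ≤ (∑ y, r y * sd y ^ ((2:ℝ)/3)) * D ^ ((1:ℝ)/3) := by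
    rw [Finset.sum_mul]
    refine Finset.sum_le_sum fun y _ => ?_
    rw [mul_assoc]
    exact mul_le_mul_of_nonneg_left (hQle y) (hr y)
  -- step 5 : Hölder with p = 3, q = 3/2
  have hpq : Real.HolderConjugate 3 (3/2) := ⟨by norm_num, by norm_num, by norm_num⟩
  have h5 : (∑ y, r y * sd y ^ ((2:ℝ)/3))
      ≤ A ^ ((1:ℝ)/3) * (∑ y, r y * sd y) ^ ((2:ℝ)/3) := by
    have := Real.inner_le_Lp_mul_Lq (s := (univ : Finset β))
      (f := fun y => r y ^ ((1:ℝ)/3)) (g := fun y => (r y * sd y) ^ ((2:ℝ)/3)) hpq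
    have hfg : ∀ y, r y ^ ((1:ℝ)/3) * (r y * sd y) ^ ((2:ℝ)/3)
        = r y * sd y ^ ((2:ℝ)/3) := by
      intro y
      rw [Real.mul_rpow (hr y) (hsd0 y), ← mul_assoc,
        ← Real.rpow_add' (hr y) (by norm_num : (1:ℝ)/3 + 2/3 ≠ 0)]
      norm_num
    have hf3 : ∀ y, |r y ^ ((1:ℝ)/3)| ^ (3:ℝ) = r y := by
      intro y
      rw [abs_of_nonneg (Real.rpow_nonneg (hr y) _), ← Real.rpow_mul (hr y)]
      norm_num
    have hg32 : ∀ y, |(r y * sd y) ^ ((2:ℝ)/3)| ^ ((3:ℝ)/2) = r y * sd y := by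
      intro y
      rw [abs_of_nonneg (Real.rpow_nonneg (mul_nonneg (hr y) (hsd0 y)) _),
        ← Real.rpow_mul (mul_nonneg (hr y) (hsd0 y))]
      norm_num
    simp only [hfg] at this
    calc (∑ y, r y * sd y ^ ((2:ℝ)/3))
        ≤ (∑ y, |r y ^ ((1:ℝ)/3)| ^ (3:ℝ)) ^ ((1:ℝ)/3)
          * (∑ y, |(r y * sd y) ^ ((2:ℝ)/3)| ^ ((3:ℝ)/2)) ^ ((1:ℝ)/(3/2)) := by
          convert this using 4
      _ = A ^ ((1:ℝ)/3) * (∑ y, r y * sd y) ^ ((2:ℝ)/3) := by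
          simp only [hf3, hg32]
          norm_num
          exact Or.inl (by rw [hA])
  -- step 6 : Cauchy–Schwarz
  have h6 : (∑ y, r y * sd y) ^ ((2:ℝ)/3) ≤ B ^ ((1:ℝ)/3) * C ^ ((1:ℝ)/3) := by
    have hcs : (∑ y, r y * sd y) ^ 2 ≤ B * C :=
      Finset.sum_mul_sq_le_sq_mul_sq univ r sd
    have hrs0 : 0 ≤ ∑ y, r y * sd y :=
      Finset.sum_nonneg fun y _ => mul_nonneg (hr y) (hsd0 y)
    calc (∑ y, r y * sd y) ^ ((2:ℝ)/3)
        = ((∑ y, r y * sd y) ^ (2:ℕ)) ^ ((1:ℝ)/3) := by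
          rw [← Real.rpow_natCast _ 2, ← Real.rpow_mul hrs0]; norm_num
      _ ≤ (B * C) ^ ((1:ℝ)/3) := Real.rpow_le_rpow (by positivity) hcs (by norm_num)
      _ = B ^ ((1:ℝ)/3) * C ^ ((1:ℝ)/3) := Real.mul_rpow hB0 hC0
  -- combine
  rw [h1]
  calc ∑ y, r y * Q y ≤ (∑ y, r y * sd y ^ ((2:ℝ)/3)) * D ^ ((1:ℝ)/3) := h4
    _ ≤ (A ^ ((1:ℝ)/3) * (∑ y, r y * sd y) ^ ((2:ℝ)/3)) * D ^ ((1:ℝ)/3) := by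
        refine mul_le_mul_of_nonneg_right h5 (Real.rpow_nonneg hD0 _)
    _ ≤ (A ^ ((1:ℝ)/3) * (B ^ ((1:ℝ)/3) * C ^ ((1:ℝ)/3))) * D ^ ((1:ℝ)/3) := by
        refine mul_le_mul_of_nonneg_right (mul_le_mul_of_nonneg_left h6
          (Real.rpow_nonneg hA0 _)) (Real.rpow_nonneg hD0 _)
    _ = A ^ ((1:ℝ)/3) * B ^ ((1:ℝ)/3) * C ^ ((1:ℝ)/3) * D ^ ((1:ℝ)/3) := by ring

private lemma join_card_eq {α β γ δ : Type*}
    [Fintype α] [Fintype β] [Fintype γ] [Fintype δ]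
    [DecidableEq α] [DecidableEq β] [DecidableEq γ] [DecidableEq δ]
    (R : Finset (α × β)) (S : Finset (β × γ)) (T : Finset (γ × δ)) :
    ((Finset.univ.filter
        (fun t : α × β × γ × δ =>
          (t.1, t.2.1) ∈ R ∧ (t.2.1, t.2.2.1) ∈ S ∧ (t.2.2.1, t.2.2.2) ∈ T)).card)
    = ∑ y : β, ∑ z : γ, if (y, z) ∈ S then
        (R.filter fun t => t.2 = y).card * (T.filter fun t => t.1 = z).card else 0 := by
  rw [Finset.card_filter]
  simp only [Fintype.sum_prod_type]
  rw [Finset.sum_comm]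
  refine Finset.sum_congr rfl fun y _ => ?_
  rw [Finset.sum_comm]
  refine Finset.sum_congr rfl fun z _ => ?_
  by_cases hS : (y, z) ∈ S
  · rw [if_pos hS, ← fiber_snd_card' R y, ← fiber_fst_card' T z,
      Finset.card_filter, Finset.card_filter, Finset.sum_mul_sum]
    refine Finset.sum_congr rfl fun x _ => Finset.sum_congr rfl fun u _ => ?_
    by_cases hR : (x, y) ∈ R <;> by_cases hT : (z, u) ∈ T <;> simp [hR, hT, hS]
  · simp [hS]

theorem three_way_join_mixed_norm_bound {α β γ δ : Type*}
    [Fintype α] [Fintype β] [Fintype γ] [Fintype δ]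
    [DecidableEq α] [DecidableEq β] [DecidableEq γ] [DecidableEq δ]
    (R : Finset (α × β)) (S : Finset (β × γ)) (T : Finset (γ × δ)) :
    ((Finset.univ.filter
        (fun t : α × β × γ × δ =>
          (t.1, t.2.1) ∈ R ∧ (t.2.1, t.2.2.1) ∈ S ∧ (t.2.2.1, t.2.2.2) ∈ T)).card : ℝ)
    ≤ (R.card : ℝ) ^ ((1 : ℝ) / 3)
      * (∑ y, ((R.filter (fun t => t.2 = y)).card : ℝ) ^ 2) ^ ((1 : ℝ) / 3)
      * (∑ y, ((S.filter (fun t => t.1 = y)).card : ℝ) ^ 2) ^ ((1 : ℝ) / 3)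
      * (∑ z, ((T.filter (fun t => t.1 = z)).card : ℝ) ^ 3) ^ ((1 : ℝ) / 3) := by
  classical
  have hcard : R.card = ∑ y : β, (R.filter fun t => t.2 = y).card :=
    Finset.card_eq_sum_card_fiberwise fun x _ => Finset.mem_univ _
  have hmain := main_real_bound S
    (fun y => ((R.filter fun t => t.2 = y).card : ℝ))
    (fun z => ((T.filter fun t => t.1 = z).card : ℝ))
    (fun y => ((S.filter fun t => t.1 = y).card : ℝ))
    (fun y => by positivity) (fun z => by positivity)
    (fun y => by rw [fiber_fst_card' S y])
  have hLHS : ((Finset.univ.filter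
        (fun t : α × β × γ × δ =>
          (t.1, t.2.1) ∈ R ∧ (t.2.1, t.2.2.1) ∈ S ∧ (t.2.2.1, t.2.2.2) ∈ T)).card : ℝ)
      = ∑ y : β, ∑ z : γ, if (y, z) ∈ S then
          ((R.filter fun t => t.2 = y).card : ℝ) * ((T.filter fun t => t.1 = z).card : ℝ)
        else 0 := by
    rw [join_card_eq R S T]
    push_cast
    rfl
  rw [hLHS, hcard]
  push_cast
  exact hmain
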